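/- Let u : ℝ → ℝ be eight times continuously differentiable and let x ∈ ℝ. Then the function h ↦ (u(x−3h) − 6u(x−2h) + 15u(x−h) − 20u(x) + 15u(x+h) − 6u(x+2h) + u(x+3h))/(64h) − (h⁵/64)·u⁽⁶⁾(x) is O(h⁷) as h → 0 (h ≠ 0), where u⁽⁶⁾ denotes the sixth derivative of u. -/

import Mathlib

open Filter Asymptotics Finset

lemma taylor_remainder_isBigO : ∀ (n : ℕ) (u : ℝ → ℝ), ContDiff ℝ (n + 1 : ℕ) u → ∀ x : ℝ,
    (fun h : ℝ => u (x + h)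
        - ∑ j ∈ Finset.range (n + 1), h ^ j / (j.factorial : ℝ) * iteratedDeriv j u x)
      =O[nhds 0] fun h : ℝ => h ^ (n + 1) := by
  intro n
  induction n with
  | zero =>
    intro u hu x
    have hd : HasDerivAt u (deriv u x) x :=
      ((hu.differentiable (by norm_num)) x).hasDerivAt
    have h1 := hd.isBigO_sub
    have hcomp : Tendsto (fun h : ℝ => x + h) (nhds 0) (nhds x) := by
      have hcont : Continuous fun h : ℝ => x + h := by continuity
      simpa using hcont.tendsto 0
    have := h1.comp_tendsto hcomp
    simpa [Function.comp_def, add_sub_cancel_left] using this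
  | succ n ih =>
    intro u hu x
    have hu' : ContDiff ℝ ((n + 1 : ℕ) + 1 : WithTop ℕ∞) u := by exact_mod_cast hu
    have hv : ContDiff ℝ (n + 1 : ℕ) (deriv u) := by
      have := (contDiff_succ_iff_deriv.mp hu').2.2
      exact_mod_cast this
    have hdiff : Differentiable ℝ u := (contDiff_succ_iff_deriv.mp hu').1
    set c : ℕ → ℝ := fun j => iteratedDeriv j u x with hc
    set g : ℝ → ℝ := fun h => u (x + h) - ∑ j ∈ Finset.range (n + 2), h ^ j / (j.factorial : ℝ) * c j with hg
    set g' : ℝ → ℝ := fun h => deriv u (x + h) - ∑ j ∈ Finset.range (n + 1), h ^ j / (j.factorial : ℝ) * c (j + 1) with hg'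
    have hgd : ∀ h : ℝ, HasDerivAt g (g' h) h := by
      intro h
      have h1 : HasDerivAt (fun h : ℝ => u (x + h)) (deriv u (x + h)) h := by
        have := ((hdiff (x + h)).hasDerivAt).comp h ((hasDerivAt_id h).const_add x)
        simpa [Function.comp_def] using this
      have h2 : HasDerivAt (fun h : ℝ => ∑ j ∈ Finset.range (n + 2), h ^ j / (j.factorial : ℝ) * c j)
          (∑ j ∈ Finset.range (n + 2), (j : ℝ) * h ^ (j - 1) / (j.factorial : ℝ) * c j) h := by
        apply HasDerivAt.fun_sum
        intro j _
        exact ((hasDerivAt_pow j h).div_const _).mul_const _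
      have hsum : (∑ j ∈ Finset.range (n + 2), (j : ℝ) * h ^ (j - 1) / (j.factorial : ℝ) * c j)
          = ∑ j ∈ Finset.range (n + 1), h ^ j / (j.factorial : ℝ) * c (j + 1) := by
        rw [Finset.sum_range_succ']
        simp only [Nat.cast_zero, zero_mul, Nat.factorial_zero, Nat.cast_one, zero_div, zero_mul,
          add_zero, Nat.add_sub_cancel]
        apply Finset.sum_congr rfl
        intro j _
        have hfac : ((j + 1).factorial : ℝ) = (j + 1 : ℝ) * (j.factorial : ℝ) := by
          rw [Nat.factorial_succ]; push_cast; ring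
        rw [hfac]
        have hj : (j + 1 : ℝ) ≠ 0 := by positivity
        have hjf : (j.factorial : ℝ) ≠ 0 := by positivity
        field_simp
        push_cast
        ring
      have h3 := h1.sub h2
      rw [hsum] at h3
      exact h3
    -- bound on g'
    have hvO : g' =O[nhds 0] fun h : ℝ => h ^ (n + 1) := by
      have := ih (deriv u) hv x
      have heq : g' = fun h : ℝ => deriv u (x + h)
          - ∑ j ∈ Finset.range (n + 1), h ^ j / (j.factorial : ℝ) * iteratedDeriv j (deriv u) x := by
        funext h
        simp only [hg']
        congr 1
        apply Finset.sum_congr rfl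
        intro j _
        rw [hc, ← iteratedDeriv_succ']
      rw [heq]
      exact this
    obtain ⟨C, hC⟩ := hvO.bound
    rw [Metric.eventually_nhds_iff] at hC
    obtain ⟨δ, hδ, hbd⟩ := hC
    set C' := max C 0 with hC'
    have hC'0 : 0 ≤ C' := le_max_right _ _
    rw [isBigO_iff]
    refine ⟨C', Metric.eventually_nhds_iff.mpr ⟨δ, hδ, ?_⟩⟩
    intro h hhδ
    simp only [Real.dist_eq, sub_zero] at hhδ
    have hbound : ∀ t ∈ Set.uIcc (0 : ℝ) h, ‖g' t‖ ≤ C' * |h| ^ (n + 1) := by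
      intro t ht
      rw [Set.uIcc_eq_union] at ht
      have habs : |t| ≤ |h| := by
        rcases ht with ht | ht
        · rw [abs_of_nonneg ht.1]; exact le_trans ht.2 (le_abs_self h)
        · rw [abs_of_nonpos ht.2]
          calc -t ≤ -h := neg_le_neg ht.1
            _ ≤ |h| := neg_le_abs h
      have htδ : dist t 0 < δ := by
        simp only [Real.dist_eq, sub_zero]; exact lt_of_le_of_lt habs hhδ
      have := hbd htδ
      calc ‖g' t‖ ≤ C * ‖t ^ (n + 1)‖ := this
        _ ≤ C' * ‖t ^ (n + 1)‖ := by
            apply mul_le_mul_of_nonneg_right (le_max_left _ _) (norm_nonneg _)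
        _ ≤ C' * |h| ^ (n + 1) := by
            apply mul_le_mul_of_nonneg_left _ hC'0
            rw [norm_pow, Real.norm_eq_abs]
            exact pow_le_pow_left₀ (abs_nonneg _) habs _
    have hmvt := (convex_uIcc (0 : ℝ) h).norm_image_sub_le_of_norm_hasDerivWithin_le
      (fun t _ => (hgd t).hasDerivWithinAt) hbound Set.left_mem_uIcc Set.right_mem_uIcc
    have hg0 : g 0 = 0 := by
      rw [hg]
      simp only [add_zero]
      rw [Finset.sum_range_succ']
      simp [hc]
    rw [hg0, sub_zero] at hmvt
    have hn0 : ‖h - 0‖ = |h| := by simp [Real.norm_eq_abs]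
    rw [hn0] at hmvt
    calc ‖g h‖ ≤ C' * |h| ^ (n + 1) * |h| := hmvt
      _ = C' * ‖h ^ (n + 1 + 1)‖ := by rw [norm_pow, Real.norm_eq_abs]; ring

/-- Kreiss–Oliger dissipation (with ε = 1): for a C⁸ function u,
(u(x−3h) − 6u(x−2h) + 15u(x−h) − 20u(x) + 15u(x+h) − 6u(x+2h) + u(x+3h))/(64h)
− (h⁵/64)u⁽⁶⁾(x) = O(h⁷) as h → 0. -/
theorem kreiss_oliger_dissipation (u : ℝ → ℝ) (hu : ContDiff ℝ 8 u) (x : ℝ) :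
    (fun h : ℝ =>
        (u (x - 3 * h) - 6 * u (x - 2 * h) + 15 * u (x - h) - 20 * u x
            + 15 * u (x + h) - 6 * u (x + 2 * h) + u (x + 3 * h)) / (64 * h)
          - (h ^ 5 / 64) * iteratedDeriv 6 u x)
      =O[nhdsWithin (0 : ℝ) {0}ᶜ] fun h : ℝ => h ^ 7 := by
  set P : ℝ → ℝ := fun t => ∑ j ∈ Finset.range 8, t ^ j / (j.factorial : ℝ) * iteratedDeriv j u x with hP
  set R : ℝ → ℝ := fun t => u (x + t) - P t with hR
  have hRO : R =O[nhds 0] fun t : ℝ => t ^ 8 := by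
    have := taylor_remainder_isBigO 7 u (by exact_mod_cast hu) x
    exact this
  have hRk : ∀ k : ℝ, (fun h : ℝ => R (k * h)) =O[nhds 0] fun h : ℝ => h ^ 8 := by
    intro k
    have ht : Tendsto (fun h : ℝ => k * h) (nhds 0) (nhds 0) := by
      have hcont : Continuous fun h : ℝ => k * h := by continuity
      simpa using hcont.tendsto 0
    have h1 := hRO.comp_tendsto ht
    have h2 : (fun h : ℝ => (k * h) ^ 8) =O[nhds (0:ℝ)] fun h : ℝ => h ^ 8 := by
      simp only [mul_pow]
      exact (isBigO_refl (fun h : ℝ => h ^ 8) _).const_mul_left _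
    exact (by simpa [Function.comp_def] using h1 : (fun h : ℝ => R (k * h)) =O[nhds 0] fun h => (k*h)^8).trans h2
  set S : ℝ → ℝ := fun h => R ((-3) * h) - 6 * R ((-2) * h) + 15 * R ((-1) * h)
      + 15 * R (1 * h) - 6 * R (2 * h) + R (3 * h) with hS
  have hSO : S =O[nhds 0] fun h : ℝ => h ^ 8 := by
    rw [hS]
    exact ((((((hRk (-3)).sub ((hRk (-2)).const_mul_left 6)).add
      ((hRk (-1)).const_mul_left 15)).add ((hRk 1).const_mul_left 15)).sub
      ((hRk 2).const_mul_left 6)).add (hRk 3))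
  have hP0 : P 0 = u x := by
    simp [hP, Finset.sum_range_succ]
  have hPoly : ∀ h : ℝ, P ((-3) * h) - 6 * P ((-2) * h) + 15 * P ((-1) * h) - 20 * P 0
      + 15 * P (1 * h) - 6 * P (2 * h) + P (3 * h) = h ^ 6 * iteratedDeriv 6 u x := by
    intro h
    simp only [hP, Finset.sum_range_succ, Finset.sum_range_zero]
    norm_num [Nat.factorial]
    ring
  have hE : ∀ h : ℝ, h ≠ 0 →
      (u (x - 3 * h) - 6 * u (x - 2 * h) + 15 * u (x - h) - 20 * u x
            + 15 * u (x + h) - 6 * u (x + 2 * h) + u (x + 3 * h)) / (64 * h)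
          - (h ^ 5 / 64) * iteratedDeriv 6 u x = S h / (64 * h) := by
    intro h hh
    have hu' : ∀ t : ℝ, u (x + t) = P t + R t := by intro t; rw [hR]; ring
    have e1 : u (x - 3 * h) = P ((-3) * h) + R ((-3) * h) := by
      rw [← hu']; ring_nf
    have e2 : u (x - 2 * h) = P ((-2) * h) + R ((-2) * h) := by
      rw [← hu']; ring_nf
    have e3 : u (x - h) = P ((-1) * h) + R ((-1) * h) := by
      rw [← hu']; ring_nf
    have e4 : u x = P 0 := hP0.symm
    have e5 : u (x + h) = P (1 * h) + R (1 * h) := by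
      rw [← hu']; ring_nf
    have e6 : u (x + 2 * h) = P (2 * h) + R (2 * h) := by rw [← hu']
    have e7 : u (x + 3 * h) = P (3 * h) + R (3 * h) := by rw [← hu']
    rw [e1, e2, e3, e4, e5, e6, e7]
    have key : P ((-3) * h) + R ((-3) * h) - 6 * (P ((-2) * h) + R ((-2) * h))
        + 15 * (P ((-1) * h) + R ((-1) * h)) - 20 * P 0 + 15 * (P (1 * h) + R (1 * h))
        - 6 * (P (2 * h) + R (2 * h)) + (P (3 * h) + R (3 * h))
        = h ^ 6 * iteratedDeriv 6 u x + S h := by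
      rw [hS]; linear_combination hPoly h
    rw [key]
    field_simp
    ring
  have heq : (fun h : ℝ =>
        (u (x - 3 * h) - 6 * u (x - 2 * h) + 15 * u (x - h) - 20 * u x
            + 15 * u (x + h) - 6 * u (x + 2 * h) + u (x + 3 * h)) / (64 * h)
          - (h ^ 5 / 64) * iteratedDeriv 6 u x)
      =ᶠ[nhdsWithin (0 : ℝ) {0}ᶜ] fun h => S h / (64 * h) := by
    filter_upwards [self_mem_nhdsWithin] with h hh
    exact hE h hh
  refine IsBigO.congr' ?_ heq.symm EventuallyEq.rfl
  have hSO' : S =O[nhdsWithin (0 : ℝ) {0}ᶜ] fun h : ℝ => h ^ 8 := hSO.mono nhdsWithin_le_nhds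
  have hinv : (fun h : ℝ => (64 * h)⁻¹) =O[nhdsWithin (0 : ℝ) {0}ᶜ] fun h : ℝ => h⁻¹ := by
    rw [isBigO_iff]
    refine ⟨1 / 64, Filter.Eventually.of_forall fun h => ?_⟩
    simp only [mul_inv, Real.norm_eq_abs, abs_mul]
    rw [show |(64:ℝ)⁻¹| = 1 / 64 by norm_num]
  have hmul := hSO'.mul hinv
  have hfin : (fun h : ℝ => h ^ 8 * h⁻¹) =O[nhdsWithin (0 : ℝ) {0}ᶜ] fun h : ℝ => h ^ 7 := by
    apply Filter.EventuallyEq.isBigO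
    filter_upwards [self_mem_nhdsWithin] with h hh
    have hne : h ≠ 0 := hh
    rw [show (8:ℕ) = 7 + 1 from rfl, pow_succ, mul_assoc, mul_inv_cancel₀ hne, mul_one]
  have := hmul.trans hfin
  exact this.congr' (Filter.Eventually.of_forall fun h => (div_eq_mul_inv (S h) (64 * h)).symm)
    EventuallyEq.rfl
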